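/- Let p be a prime, let 𝔽 be a finite field of characteristic p, take R = 𝔽, and assume the strong genericity hypothesis: a_0 < a_1 < a_2, a_1 − a_0 > 3, a_2 − a_1 > 3 and a_2 − a_0 < p − 4. Let W be a lower triangular unipotent matrix with descent data (W_{ii} = 1 and W_{ij} = 0 for j > i), let V = W·Diag(1, u^e, u^{2e}), let f_0, f_1, f_2 ∈ M = S̄³ be the columns of V with respect to the standard basis (e_0, e_1, e_2), and let Fil ⊆ M be the S̄-submodule generated by f_0, f_1, f_2. Let A be an invertible lower triangular matrix with descent data and let φ_2 : Fil → M be an additive map with φ_2(s·x) = φ(s)·φ_2(x) for all s ∈ S̄, x ∈ Fil, and φ_2(f_j) = Σ_i A_{ij} e_i for all j. Then there exist an invertible matrix with descent data C ∈ GL_3(S̄), elements v_{1,0}, v_{2,0}, v'_{2,0}, v_{2,1} ∈ 𝔽 and α_0, α_1, α_2 ∈ 𝔽^× such that, setting ẽ_j = Σ_i C_{ij} e_i, the elements f̃_0 = ẽ_0 + u^{[a_1−a_0]} v_{1,0} ẽ_1 + u^{[a_2−a_0]}(v_{2,0} + u^e v'_{2,0}) ẽ_2, f̃_1 = u^e ẽ_1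 + u^{e+[a_2−a_1]} v_{2,1} ẽ_2 and f̃_2 = u^{2e} ẽ_2 all lie in Fil, generate Fil as an S̄-module, and satisfy φ_2(f̃_i) = α_i ẽ_i for i = 0, 1, 2. -/

import Mathlib

open Polynomial

/-- `S̄ = R[u]/(u^{ep})` with `e = p - 1`, realized as `R[X]/(X^{(p-1)p})`. -/
noncomputable def Sbar (p : ℕ) (R : Type*) [CommRing R] : Type _ :=
  R[X] ⧸ Ideal.span ({(X : R[X]) ^ ((p - 1) * p)} : Set R[X])

noncomputable instance (p : ℕ) (R : Type*) [CommRing R] : CommRing (Sbar p R) :=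
  inferInstanceAs (CommRing (R[X] ⧸ Ideal.span ({(X : R[X]) ^ ((p - 1) * p)} : Set R[X])))

noncomputable instance (p : ℕ) (R : Type*) [CommRing R] : Algebra R (Sbar p R) :=
  inferInstanceAs (Algebra R (R[X] ⧸ Ideal.span ({(X : R[X]) ^ ((p - 1) * p)} : Set R[X])))

/-- The image `u` of the variable `X` in `S̄`. -/
noncomputable def Sbar.u (p : ℕ) (R : Type*) [CommRing R] : Sbar p R :=
  (Ideal.Quotient.mk (Ideal.span ({(X : R[X]) ^ ((p - 1) * p)} : Set R[X])) X :
    R[X] ⧸ Ideal.span ({(X : R[X]) ^ ((p - 1) * p)} : Set R[X]))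

lemma Sbar.u_pow_zero (p : ℕ) (R : Type*) [CommRing R] :
    Sbar.u p R ^ ((p - 1) * p) = 0 := by
  show (Ideal.Quotient.mk _ X : R[X] ⧸ _) ^ ((p-1)*p) = 0
  rw [← map_pow, Ideal.Quotient.eq_zero_iff_mem]
  exact Ideal.mem_span_singleton_self _

lemma Sbar.nontrivial (p : ℕ) (R : Type*) [CommRing R] [Nontrivial R] (hp : 1 ≤ (p-1)*p) :
    Nontrivial (Sbar p R) := by
  apply Ideal.Quotient.nontrivial_iff.mpr
  intro h
  rw [Ideal.span_singleton_eq_top] at h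
  exact not_isUnit_X (isUnit_of_dvd_unit (dvd_pow_self X (by omega)) h)

lemma adjoin_decomp {R A : Type*} [CommRing R] [CommRing A] [Algebra R A] (t : A)
    {w : A} (hw : w ∈ Algebra.adjoin R ({t} : Set A)) :
    ∃ c : R, ∃ w' ∈ Algebra.adjoin R ({t} : Set A), w = algebraMap R A c + t * w' := by
  induction hw using Algebra.adjoin_induction with
  | mem x hx =>
      rcases Set.mem_singleton_iff.1 hx with rfl
      exact ⟨0, 1, Subalgebra.one_mem _, by simp⟩
  | algebraMap r => exact ⟨r, 0, Subalgebra.zero_mem _, by simp⟩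
  | add x y hx hy ihx ihy =>
      obtain ⟨c1, w1, hw1, e1⟩ := ihx
      obtain ⟨c2, w2, hw2, e2⟩ := ihy
      exact ⟨c1 + c2, w1 + w2, Subalgebra.add_mem _ hw1 hw2, by rw [e1, e2, map_add]; ring⟩
  | mul x y hx hy ihx ihy =>
      obtain ⟨c1, w1, hw1, e1⟩ := ihx
      obtain ⟨c2, w2, hw2, e2⟩ := ihy
      refine ⟨c1 * c2, algebraMap R A c1 * w2 + algebraMap R A c2 * w1 + t * (w1 * w2), ?_, ?_⟩
      · exact Subalgebra.add_mem _ (Subalgebra.add_mem _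
          (Subalgebra.mul_mem _ (Subalgebra.algebraMap_mem _ _) hw2)
          (Subalgebra.mul_mem _ (Subalgebra.algebraMap_mem _ _) hw1))
          (Subalgebra.mul_mem _ (Algebra.subset_adjoin rfl) (Subalgebra.mul_mem _ hw1 hw2))
      · rw [e1, e2, map_mul]; ring

lemma br_eval {q b : ℕ} {d : ℤ} (hb : b < q) (hdvd : (q:ℤ) ∣ ((b:ℤ) + d))
    (hd1 : 1 ≤ d) (hd2 : d ≤ (q:ℤ) - 1) : (b : ℤ) = (q:ℤ) - d := by
  obtain ⟨k, hk⟩ := hdvd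
  have hb' : (b:ℤ) < q := by exact_mod_cast hb
  have hb0 : (0:ℤ) ≤ b := Int.natCast_nonneg _
  have hq1 : (1:ℤ) ≤ q := by linarith
  have hkge : 1 ≤ k := by nlinarith
  have hkle : k ≤ 1 := by nlinarith
  have hk1 : k = 1 := le_antisymm hkle hkge
  rw [hk1, mul_one] at hk; linarith

set_option maxHeartbeats 4000000 in
set_option maxRecDepth 8000 in
/-- Diagonalization of the Frobenius on an ordinary quasi-Breuil module mod `p`:
if `Fil` is generated by the columns of `V = W·Diag(1, u^e, u^{2e})` with `W` lower
triangular unipotent with descent data, and `φ₂` is semilinear with invertible lower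
triangular Frobenius matrix `A` with descent data, then there is a new framed basis
`ẽ = e·C` (`C` invertible with descent data) and generators `f̃` of `Fil` in ordinary
form on which `φ₂` acts diagonally: `φ₂(f̃_i) = α_i ẽ_i` with `α_i ∈ 𝔽ˣ`. -/
theorem ordinary_form_with_diagonal_frobenius
    (p : ℕ) (hp : p.Prime)
    (𝔽 : Type*) [Field 𝔽] [Finite 𝔽] [CharP 𝔽 p]
    (a : Fin 3 → ℤ)
    (ha01 : a 0 < a 1) (ha12 : a 1 < a 2)
    (hg01 : 3 < a 1 - a 0) (hg12 : 3 < a 2 - a 1) (hg02 : a 2 - a 0 < (p : ℤ) - 4)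
    (br : Fin 3 → Fin 3 → ℕ)
    (hbr : ∀ i j, br i j < p - 1 ∧ ((p : ℤ) - 1) ∣ ((br i j : ℤ) + (a i - a j)))
    (φ : Sbar p 𝔽 →ₐ[𝔽] Sbar p 𝔽) (hφ : φ (Sbar.u p 𝔽) = Sbar.u p 𝔽 ^ p)
    (W : Matrix (Fin 3) (Fin 3) (Sbar p 𝔽))
    (hWdd : ∀ i j, ∃ w ∈ Algebra.adjoin 𝔽 ({Sbar.u p 𝔽 ^ (p - 1)} : Set (Sbar p 𝔽)),
        W i j = Sbar.u p 𝔽 ^ br i j * w)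
    (hWupper : ∀ i j : Fin 3, i < j → W i j = 0)
    (hWdiag : ∀ i : Fin 3, W i i = 1)
    (V : Matrix (Fin 3) (Fin 3) (Sbar p 𝔽))
    (hV : V = W * Matrix.diagonal ![1, Sbar.u p 𝔽 ^ (p - 1), Sbar.u p 𝔽 ^ (2 * (p - 1))])
    (f : Fin 3 → (Fin 3 → Sbar p 𝔽))
    (hf : ∀ j, f j = fun i => V i j)
    (Fil : Submodule (Sbar p 𝔽) (Fin 3 → Sbar p 𝔽))
    (hFil : Fil = Submodule.span (Sbar p 𝔽) {f 0, f 1, f 2})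
    (hmem : ∀ j, f j ∈ Fil)
    (A : Matrix (Fin 3) (Fin 3) (Sbar p 𝔽))
    (hAunit : IsUnit A)
    (hAdd : ∀ i j, ∃ w ∈ Algebra.adjoin 𝔽 ({Sbar.u p 𝔽 ^ (p - 1)} : Set (Sbar p 𝔽)),
        A i j = Sbar.u p 𝔽 ^ br i j * w)
    (hAlower : ∀ i j : Fin 3, i < j → A i j = 0)
    (φ2 : Fil →+ (Fin 3 → Sbar p 𝔽))
    (hφ2lin : ∀ (s : Sbar p 𝔽) (x : Fil), φ2 (s • x) = φ s • (φ2 x))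
    (hφ2f : ∀ j : Fin 3, φ2 ⟨f j, hmem j⟩ = fun i => A i j) :
    ∃ C : Matrix (Fin 3) (Fin 3) (Sbar p 𝔽),
      IsUnit C ∧
      (∀ i j, ∃ w ∈ Algebra.adjoin 𝔽 ({Sbar.u p 𝔽 ^ (p - 1)} : Set (Sbar p 𝔽)),
          C i j = Sbar.u p 𝔽 ^ br i j * w) ∧
      ∃ (v10 v20 v20' v21 : 𝔽) (α : Fin 3 → 𝔽ˣ)
        (ft : Fin 3 → (Fin 3 → Sbar p 𝔽)) (hmem' : ∀ i, ft i ∈ Fil),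
        ft 0 = (fun i => C i 0)
            + (Sbar.u p 𝔽 ^ br 1 0 * algebraMap 𝔽 (Sbar p 𝔽) v10) • (fun i => C i 1)
            + (Sbar.u p 𝔽 ^ br 2 0 *
                (algebraMap 𝔽 (Sbar p 𝔽) v20 +
                  Sbar.u p 𝔽 ^ (p - 1) * algebraMap 𝔽 (Sbar p 𝔽) v20')) •
                (fun i => C i 2) ∧
        ft 1 = (Sbar.u p 𝔽 ^ (p - 1)) • (fun i => C i 1)
            + (Sbar.u p 𝔽 ^ ((p - 1) + br 2 1) * algebraMap 𝔽 (Sbar p 𝔽) v21) •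
                (fun i => C i 2) ∧
        ft 2 = (Sbar.u p 𝔽 ^ (2 * (p - 1))) • (fun i => C i 2) ∧
        Submodule.span (Sbar p 𝔽) {ft 0, ft 1, ft 2} = Fil ∧
        ∀ i : Fin 3, φ2 ⟨ft i, hmem' i⟩ =
          algebraMap 𝔽 (Sbar p 𝔽) ((α i : 𝔽)) • (fun k => C k i) := by

  classical
  obtain ⟨q, rfl⟩ : ∃ q, p = q + 1 := ⟨p - 1, by have := hp.pos; omega⟩
  simp only [Nat.add_sub_cancel] at hbr hWdd hAdd hV ⊢
  push_cast at hg02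
  have hq12 : 12 ≤ q := by omega
  have hdvd : ∀ i j : Fin 3, (q:ℤ) ∣ ((br i j:ℤ) + (a i - a j)) := by
    intro i j
    have h := (hbr i j).2
    have : ((q:ℤ) + 1 - 1) = (q:ℤ) := by ring
    push_cast at h
    rwa [this] at h
  have e10 : (br 1 0 : ℤ) = (q:ℤ) - (a 1 - a 0) :=
    br_eval (hbr 1 0).1 (hdvd 1 0) (by omega) (by omega)
  have e21 : (br 2 1 : ℤ) = (q:ℤ) - (a 2 - a 1) :=
    br_eval (hbr 2 1).1 (hdvd 2 1) (by omega) (by omega)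
  have e20 : (br 2 0 : ℤ) = (q:ℤ) - (a 2 - a 0) :=
    br_eval (hbr 2 0).1 (hdvd 2 0) (by omega) (by omega)
  have hb10 : 2 ≤ br 1 0 := by omega
  have hb21 : 2 ≤ br 2 1 := by omega
  have hb20 : 3 ≤ br 2 0 := by omega
  have hsum : br 1 0 + br 2 1 = br 2 0 + q := by omega
  have hbii : ∀ i : Fin 3, br i i = 0 := by
    intro i
    have h := hdvd i i
    simp only [sub_self, add_zero] at h
    have := (hbr i i).1
    have hq' : (q:ℤ) ∣ (br i i : ℤ) := h
    rcases hq' with ⟨k, hk⟩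
    have hb0 : (0:ℤ) ≤ br i i := Int.natCast_nonneg _
    have hb1 : (br i i:ℤ) < q := by exact_mod_cast this
    have hk0 : k = 0 := by nlinarith
    rw [hk0, mul_zero] at hk
    exact_mod_cast hk
  -- abbreviations
  set t := Sbar.u (q+1) 𝔽 ^ q with htdef
  set U10 := Sbar.u (q+1) 𝔽 ^ br 1 0 with hU10def
  set U21 := Sbar.u (q+1) 𝔽 ^ br 2 1 with hU21def
  set U20 := Sbar.u (q+1) 𝔽 ^ br 2 0 with hU20def
  haveI hnt : Nontrivial (Sbar (q+1) 𝔽) := by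
    refine Sbar.nontrivial _ _ ?_
    rw [Nat.add_sub_cancel]
    nlinarith
  have htp : t ^ (q+1) = 0 := by
    rw [htdef, ← pow_mul, show q * (q+1) = (q+1-1)*(q+1) by rw [Nat.add_sub_cancel]]
    exact Sbar.u_pow_zero _ _
  have hφt : φ t = 0 := by
    rw [htdef, map_pow, hφ, ← pow_mul,
      show (q+1) * q = (q+1-1)*(q+1) by rw [Nat.add_sub_cancel]; ring]
    exact Sbar.u_pow_zero _ _
  have hφU : ∀ b : ℕ, φ (Sbar.u (q+1) 𝔽 ^ b) = Sbar.u (q+1) 𝔽 ^ b * t ^ b := by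
    intro b
    rw [map_pow, hφ, ← pow_mul, htdef, ← pow_mul, ← pow_add]
    congr 1; ring
  have hφU10 : φ U10 = U10 * t ^ br 1 0 := by rw [hU10def]; exact hφU _
  have hφU21 : φ U21 = U21 * t ^ br 2 1 := by rw [hU21def]; exact hφU _
  have hφU20 : φ U20 = U20 * t ^ br 2 0 := by rw [hU20def]; exact hφU _
  have htmem : t ∈ Algebra.adjoin 𝔽 ({t} : Set (Sbar (q+1) 𝔽)) := Algebra.subset_adjoin rfl
  -- units on the diagonal of A
  have hdetA := (Matrix.isUnit_iff_isUnit_det A).1 hAunit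
  rw [Matrix.det_fin_three] at hdetA
  have z01 : A 0 1 = 0 := hAlower 0 1 (by decide)
  have z02 : A 0 2 = 0 := hAlower 0 2 (by decide)
  have z12 : A 1 2 = 0 := hAlower 1 2 (by decide)
  rw [z01, z02, z12] at hdetA
  simp only [zero_mul, mul_zero, sub_zero, add_zero, zero_add] at hdetA
  have hU00 : IsUnit (A 0 0) := isUnit_of_mul_isUnit_left (isUnit_of_mul_isUnit_left hdetA)
  have hU11 : IsUnit (A 1 1) := isUnit_of_mul_isUnit_right (isUnit_of_mul_isUnit_left hdetA)
  have hU22 : IsUnit (A 2 2) := isUnit_of_mul_isUnit_right hdetA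
  -- diagonal entries lie in the subring
  have hA00mem : A 0 0 ∈ Algebra.adjoin 𝔽 ({t} : Set (Sbar (q+1) 𝔽)) := by
    obtain ⟨w, hw, he⟩ := hAdd 0 0; rw [he, hbii 0, pow_zero, one_mul]; exact hw
  have hA11mem : A 1 1 ∈ Algebra.adjoin 𝔽 ({t} : Set (Sbar (q+1) 𝔽)) := by
    obtain ⟨w, hw, he⟩ := hAdd 1 1; rw [he, hbii 1, pow_zero, one_mul]; exact hw
  have hA22mem : A 2 2 ∈ Algebra.adjoin 𝔽 ({t} : Set (Sbar (q+1) 𝔽)) := by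
    obtain ⟨w, hw, he⟩ := hAdd 2 2; rw [he, hbii 2, pow_zero, one_mul]; exact hw
  obtain ⟨b0, a0', ha0'm, hA00d⟩ := adjoin_decomp t hA00mem
  obtain ⟨b1, a1', ha1'm, hA11d⟩ := adjoin_decomp t hA11mem
  obtain ⟨b2, a2', ha2'm, hA22d⟩ := adjoin_decomp t hA22mem
  have hb0 : b0 ≠ 0 := by
    intro h
    have h0 : A 0 0 ^ (q+1) = 0 := by
      rw [hA00d, h, map_zero, zero_add, mul_pow, htp, zero_mul]
    exact not_isUnit_zero (h0 ▸ hU00.pow (q+1))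
  have hb1 : b1 ≠ 0 := by
    intro h
    have h0 : A 1 1 ^ (q+1) = 0 := by
      rw [hA11d, h, map_zero, zero_add, mul_pow, htp, zero_mul]
    exact not_isUnit_zero (h0 ▸ hU11.pow (q+1))
  have hb2 : b2 ≠ 0 := by
    intro h
    have h0 : A 2 2 ^ (q+1) = 0 := by
      rw [hA22d, h, map_zero, zero_add, mul_pow, htp, zero_mul]
    exact not_isUnit_zero (h0 ▸ hU22.pow (q+1))
  obtain ⟨w10, hw10m, hW10⟩ := hWdd 1 0
  obtain ⟨w21, hw21m, hW21⟩ := hWdd 2 1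
  obtain ⟨w20, hw20m, hW20⟩ := hWdd 2 0
  obtain ⟨a10, ha10m, hA10⟩ := hAdd 1 0
  obtain ⟨a21, ha21m, hA21⟩ := hAdd 2 1
  obtain ⟨a20, ha20m, hA20⟩ := hAdd 2 0
  set z0 := algebraMap 𝔽 (Sbar (q+1) 𝔽) b0⁻¹ with hz0def
  set z1 := algebraMap 𝔽 (Sbar (q+1) 𝔽) b1⁻¹ with hz1def
  have hz0 : algebraMap 𝔽 (Sbar (q+1) 𝔽) b0 * z0 = 1 := by
    rw [hz0def, ← map_mul, mul_inv_cancel₀ hb0, map_one]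
  have hz1 : algebraMap 𝔽 (Sbar (q+1) 𝔽) b1 * z1 = 1 := by
    rw [hz1def, ← map_mul, mul_inv_cancel₀ hb1, map_one]
  have hz0m : z0 ∈ Algebra.adjoin 𝔽 ({t} : Set (Sbar (q+1) 𝔽)) := by
    rw [hz0def]; exact Subalgebra.algebraMap_mem _ _
  have hz1m : z1 ∈ Algebra.adjoin 𝔽 ({t} : Set (Sbar (q+1) 𝔽)) := by
    rw [hz1def]; exact Subalgebra.algebraMap_mem _ _
  -- ===== chain (1,0) =====
  have hmem10 : a10 - w10 * A 0 0 ∈ Algebra.adjoin 𝔽 ({t} : Set (Sbar (q+1) 𝔽)) :=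
    sub_mem ha10m (mul_mem hw10m hA00mem)
  obtain ⟨c10, h10', hh10'm, hdec10⟩ := adjoin_decomp t hmem10
  set v10 := -b1⁻¹ * c10 with hv10def
  have hfe10 : c10 + b1 * v10 = 0 := by
    have : b1 * (-b1⁻¹ * c10) = -((b1 * b1⁻¹) * c10) := by ring
    rw [hv10def, this, mul_inv_cancel₀ hb1]; ring
  have hv10 : algebraMap 𝔽 (Sbar (q+1) 𝔽) c10
      + algebraMap 𝔽 (Sbar (q+1) 𝔽) b1 * algebraMap 𝔽 (Sbar (q+1) 𝔽) v10 = 0 := by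
    rw [← map_mul, ← map_add, hfe10, map_zero]
  have hmemk10 : h10' + a1' * algebraMap 𝔽 (Sbar (q+1) 𝔽) v10
      ∈ Algebra.adjoin 𝔽 ({t} : Set (Sbar (q+1) 𝔽)) :=
    add_mem hh10'm (mul_mem ha1'm (Subalgebra.algebraMap_mem _ _))
  obtain ⟨m10, k10', hk10'm, hdecK10⟩ := adjoin_decomp t hmemk10
  set B10 := U10 * (h10' + a1' * algebraMap 𝔽 (Sbar (q+1) 𝔽) v10
      + z0 * A 1 1 * t ^ (br 1 0 - 1) * algebraMap 𝔽 (Sbar (q+1) 𝔽) m10) with hB10def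
  set C10 := A 1 0 + z0 * A 1 1 * (U10 * t ^ br 1 0) * algebraMap 𝔽 (Sbar (q+1) 𝔽) m10
    with hC10def
  have hT10 : t ^ br 1 0 = t * t ^ (br 1 0 - 1) := by
    rw [← pow_succ']; congr 1; omega
  have I10 : t * B10 = C10 - W 1 0 * A 0 0
      + A 1 1 * (U10 * algebraMap 𝔽 (Sbar (q+1) 𝔽) v10) := by
    rw [hB10def, hC10def, hA10, hW10]
    linear_combination (-U10) * hdec10
      + (-(z0 * A 1 1 * algebraMap 𝔽 (Sbar (q+1) 𝔽) m10 * U10)) * hT10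
      + (-(U10 * algebraMap 𝔽 (Sbar (q+1) 𝔽) v10)) * hA11d + (-U10) * hv10
  have hφB10 : φ B10 = U10 * t ^ br 1 0 * algebraMap 𝔽 (Sbar (q+1) 𝔽) m10 := by
    have h1 : φ (h10' + a1' * algebraMap 𝔽 (Sbar (q+1) 𝔽) v10)
        = algebraMap 𝔽 (Sbar (q+1) 𝔽) m10 := by
      rw [hdecK10, map_add, map_mul, hφt, zero_mul, add_zero, AlgHom.commutes]
    have h2 : φ (z0 * A 1 1 * t ^ (br 1 0 - 1) * algebraMap 𝔽 (Sbar (q+1) 𝔽) m10) = 0 := by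
      rw [map_mul, map_mul, map_pow, hφt, zero_pow (show br 1 0 - 1 ≠ 0 by omega)]
      ring
    rw [hB10def, map_mul, map_add, h1, h2, add_zero, hφU10]
  -- ===== chain (2,1) =====
  have hmem21 : a21 - w21 * A 1 1 ∈ Algebra.adjoin 𝔽 ({t} : Set (Sbar (q+1) 𝔽)) :=
    sub_mem ha21m (mul_mem hw21m hA11mem)
  obtain ⟨c21, h21', hh21'm, hdec21⟩ := adjoin_decomp t hmem21
  set v21 := -b2⁻¹ * c21 with hv21def
  have hfe21 : c21 + b2 * v21 = 0 := by
    have : b2 * (-b2⁻¹ * c21) = -((b2 * b2⁻¹) * c21) := by ring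
    rw [hv21def, this, mul_inv_cancel₀ hb2]; ring
  have hv21 : algebraMap 𝔽 (Sbar (q+1) 𝔽) c21
      + algebraMap 𝔽 (Sbar (q+1) 𝔽) b2 * algebraMap 𝔽 (Sbar (q+1) 𝔽) v21 = 0 := by
    rw [← map_mul, ← map_add, hfe21, map_zero]
  have hmemk21 : h21' + a2' * algebraMap 𝔽 (Sbar (q+1) 𝔽) v21
      ∈ Algebra.adjoin 𝔽 ({t} : Set (Sbar (q+1) 𝔽)) :=
    add_mem hh21'm (mul_mem ha2'm (Subalgebra.algebraMap_mem _ _))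
  obtain ⟨m21, k21', hk21'm, hdecK21⟩ := adjoin_decomp t hmemk21
  set B21 := U21 * (h21' + a2' * algebraMap 𝔽 (Sbar (q+1) 𝔽) v21
      + z1 * A 2 2 * t ^ (br 2 1 - 1) * algebraMap 𝔽 (Sbar (q+1) 𝔽) m21) with hB21def
  set C21 := A 2 1 + z1 * A 2 2 * (U21 * t ^ br 2 1) * algebraMap 𝔽 (Sbar (q+1) 𝔽) m21
    with hC21def
  have hT21 : t ^ br 2 1 = t * t ^ (br 2 1 - 1) := by
    rw [← pow_succ']; congr 1; omega
  have I21 : t * B21 = C21 - W 2 1 * A 1 1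
      + A 2 2 * (U21 * algebraMap 𝔽 (Sbar (q+1) 𝔽) v21) := by
    rw [hB21def, hC21def, hA21, hW21]
    linear_combination (-U21) * hdec21
      + (-(z1 * A 2 2 * algebraMap 𝔽 (Sbar (q+1) 𝔽) m21 * U21)) * hT21
      + (-(U21 * algebraMap 𝔽 (Sbar (q+1) 𝔽) v21)) * hA22d + (-U21) * hv21
  have hφB21 : φ B21 = U21 * t ^ br 2 1 * algebraMap 𝔽 (Sbar (q+1) 𝔽) m21 := by
    have h1 : φ (h21' + a2' * algebraMap 𝔽 (Sbar (q+1) 𝔽) v21)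
        = algebraMap 𝔽 (Sbar (q+1) 𝔽) m21 := by
      rw [hdecK21, map_add, map_mul, hφt, zero_mul, add_zero, AlgHom.commutes]
    have h2 : φ (z1 * A 2 2 * t ^ (br 2 1 - 1) * algebraMap 𝔽 (Sbar (q+1) 𝔽) m21) = 0 := by
      rw [map_mul, map_mul, map_pow, hφt, zero_pow (show br 2 1 - 1 ≠ 0 by omega)]
      ring
    rw [hB21def, map_mul, map_add, h1, h2, add_zero, hφU21]
  -- ===== chain (2,0) =====
  set γ10 := a10 + z0 * A 1 1 * t ^ br 1 0 * algebraMap 𝔽 (Sbar (q+1) 𝔽) m10 with hγ10def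
  have hγ10m : γ10 ∈ Algebra.adjoin 𝔽 ({t} : Set (Sbar (q+1) 𝔽)) := by
    rw [hγ10def]
    exact add_mem ha10m (mul_mem (mul_mem (mul_mem hz0m hA11mem) (pow_mem htmem _))
      (Subalgebra.algebraMap_mem _ _))
  have hC10γ : C10 = U10 * γ10 := by rw [hC10def, hγ10def, hA10]; ring
  set γ21 := a21 + z1 * A 2 2 * t ^ br 2 1 * algebraMap 𝔽 (Sbar (q+1) 𝔽) m21 with hγ21def
  have hγ21m : γ21 ∈ Algebra.adjoin 𝔽 ({t} : Set (Sbar (q+1) 𝔽)) := by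
    rw [hγ21def]
    exact add_mem ha21m (mul_mem (mul_mem (mul_mem hz1m hA22mem) (pow_mem htmem _))
      (Subalgebra.algebraMap_mem _ _))
  have hC21γ : C21 = U21 * γ21 := by rw [hC21def, hγ21def, hA21]; ring
  set t20 := a20 + z0 * t ^ (br 1 0 + 1) * a21 * algebraMap 𝔽 (Sbar (q+1) 𝔽) m10
      - t * w21 * γ10 + (t * w10 * w21 - w20) * A 0 0
      + t * (γ21 - w21 * A 1 1) * algebraMap 𝔽 (Sbar (q+1) 𝔽) v10 with ht20def
  have ht20m : t20 ∈ Algebra.adjoin 𝔽 ({t} : Set (Sbar (q+1) 𝔽)) := by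
    rw [ht20def]
    refine add_mem (add_mem (sub_mem (add_mem ha20m ?_) ?_) ?_) ?_
    · exact mul_mem (mul_mem (mul_mem hz0m (pow_mem htmem _)) ha21m)
        (Subalgebra.algebraMap_mem _ _)
    · exact mul_mem (mul_mem htmem hw21m) hγ10m
    · exact mul_mem (sub_mem (mul_mem (mul_mem htmem hw10m) hw21m) hw20m) hA00mem
    · exact mul_mem (mul_mem htmem (sub_mem hγ21m (mul_mem hw21m hA11mem)))
        (Subalgebra.algebraMap_mem _ _)
  obtain ⟨c20x, t20', ht20'm, hdec20⟩ := adjoin_decomp t ht20m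
  set v20 := -b2⁻¹ * c20x with hv20def
  have hfe20 : c20x + b2 * v20 = 0 := by
    have : b2 * (-b2⁻¹ * c20x) = -((b2 * b2⁻¹) * c20x) := by ring
    rw [hv20def, this, mul_inv_cancel₀ hb2]; ring
  have hv20 : algebraMap 𝔽 (Sbar (q+1) 𝔽) c20x
      + algebraMap 𝔽 (Sbar (q+1) 𝔽) b2 * algebraMap 𝔽 (Sbar (q+1) 𝔽) v20 = 0 := by
    rw [← map_mul, ← map_add, hfe20, map_zero]
  have hs20m : t20' + a2' * algebraMap 𝔽 (Sbar (q+1) 𝔽) v20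
      ∈ Algebra.adjoin 𝔽 ({t} : Set (Sbar (q+1) 𝔽)) :=
    add_mem ht20'm (mul_mem ha2'm (Subalgebra.algebraMap_mem _ _))
  obtain ⟨cs, s20', hs20'm, hdecS⟩ := adjoin_decomp t hs20m
  set v20' := -b2⁻¹ * cs with hv20'def
  have hfe20' : cs + b2 * v20' = 0 := by
    have : b2 * (-b2⁻¹ * cs) = -((b2 * b2⁻¹) * cs) := by ring
    rw [hv20'def, this, mul_inv_cancel₀ hb2]; ring
  have hv20' : algebraMap 𝔽 (Sbar (q+1) 𝔽) cs
      + algebraMap 𝔽 (Sbar (q+1) 𝔽) b2 * algebraMap 𝔽 (Sbar (q+1) 𝔽) v20' = 0 := by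
    rw [← map_mul, ← map_add, hfe20', map_zero]
  have hr0m : s20' + a2' * algebraMap 𝔽 (Sbar (q+1) 𝔽) v20'
      ∈ Algebra.adjoin 𝔽 ({t} : Set (Sbar (q+1) 𝔽)) :=
    add_mem hs20'm (mul_mem ha2'm (Subalgebra.algebraMap_mem _ _))
  obtain ⟨m20, r0', hr0'm, hdecR⟩ := adjoin_decomp t hr0m
  set B20 := U20 * (s20' + a2' * algebraMap 𝔽 (Sbar (q+1) 𝔽) v20'
      + z0 * t ^ (br 2 0 - 2) * A 2 2 * algebraMap 𝔽 (Sbar (q+1) 𝔽) m20) with hB20def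
  set C20 := A 2 0 + z0 * (A 2 1 * (U10 * t ^ br 1 0) * algebraMap 𝔽 (Sbar (q+1) 𝔽) m10
      + A 2 2 * (U20 * t ^ br 2 0) * algebraMap 𝔽 (Sbar (q+1) 𝔽) m20) with hC20def
  have hUU : U10 * U21 = U20 * t := by
    rw [hU10def, hU21def, hU20def, htdef, ← pow_add, ← pow_add, hsum]
  have hT20 : t ^ br 2 0 = t * (t * t ^ (br 2 0 - 2)) := by
    rw [← pow_succ', ← pow_succ']; congr 1; omega
  have hT10p : t ^ (br 1 0 + 1) = t * t ^ br 1 0 := by rw [pow_succ]; ring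
  have key20 : t * (t * B20) = U20 * t20
      + A 2 2 * (U20 * (algebraMap 𝔽 (Sbar (q+1) 𝔽) v20
          + t * algebraMap 𝔽 (Sbar (q+1) 𝔽) v20'))
      + z0 * A 2 2 * algebraMap 𝔽 (Sbar (q+1) 𝔽) m20 * U20 * t ^ br 2 0 := by
    rw [hB20def]
    linear_combination (-(t*U20)) * hdecS + (-U20) * hdec20 + (-U20) * hv20
      + (-(t*U20)) * hv20'
      + (-(U20*(algebraMap 𝔽 (Sbar (q+1) 𝔽) v20 + t*algebraMap 𝔽 (Sbar (q+1) 𝔽) v20'))) * hA22d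
      + (-(z0*U20*(A 2 2)*algebraMap 𝔽 (Sbar (q+1) 𝔽) m20)) * hT20
  have I20 : t * (t * B20) = C20 - W 2 1 * C10 + (W 1 0 * W 2 1 - W 2 0) * A 0 0
      + (C21 - W 2 1 * A 1 1) * (U10 * algebraMap 𝔽 (Sbar (q+1) 𝔽) v10)
      + A 2 2 * (U20 * (algebraMap 𝔽 (Sbar (q+1) 𝔽) v20
          + t * algebraMap 𝔽 (Sbar (q+1) 𝔽) v20')) := by
    rw [hC20def, hC10γ, hC21γ, hA20, hA21, hW10, hW21, hW20]
    linear_combination key20 + U20 * ht20def + (z0*U20*a21*algebraMap 𝔽 (Sbar (q+1) 𝔽) m10) * hT10p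
      - (z0*a21*algebraMap 𝔽 (Sbar (q+1) 𝔽) m10*t^(br 1 0) - w21*γ10 + w10*w21*A 0 0
          + (γ21 - w21*A 1 1)*algebraMap 𝔽 (Sbar (q+1) 𝔽) v10) * hUU
  have hφB20 : φ B20 = U20 * t ^ br 2 0 * algebraMap 𝔽 (Sbar (q+1) 𝔽) m20 := by
    have h1 : φ (s20' + a2' * algebraMap 𝔽 (Sbar (q+1) 𝔽) v20')
        = algebraMap 𝔽 (Sbar (q+1) 𝔽) m20 := by
      rw [hdecR, map_add, map_mul, hφt, zero_mul, add_zero, AlgHom.commutes]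
    have h2 : φ (z0 * t ^ (br 2 0 - 2) * A 2 2 * algebraMap 𝔽 (Sbar (q+1) 𝔽) m20) = 0 := by
      rw [map_mul, map_mul, map_mul, map_pow, hφt, zero_pow (show br 2 0 - 2 ≠ 0 by omega)]
      ring
    rw [hB20def, map_mul, map_add, h1, h2, add_zero, hφU20]
  -- φ on diagonal entries
  have hφA00 : φ (A 0 0) = algebraMap 𝔽 (Sbar (q+1) 𝔽) b0 := by
    rw [hA00d, map_add, map_mul, hφt, zero_mul, add_zero, AlgHom.commutes]
  have hφA11 : φ (A 1 1) = algebraMap 𝔽 (Sbar (q+1) 𝔽) b1 := by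
    rw [hA11d, map_add, map_mul, hφt, zero_mul, add_zero, AlgHom.commutes]
  have hφA22 : φ (A 2 2) = algebraMap 𝔽 (Sbar (q+1) 𝔽) b2 := by
    rw [hA22d, map_add, map_mul, hφt, zero_mul, add_zero, AlgHom.commutes]
  -- values of the generators f
  have hu2q : Sbar.u (q+1) 𝔽 ^ (2*q) = t * t := by
    rw [htdef, ← pow_add]; congr 1; ring
  have hf0 : ∀ i, f 0 i = W i 0 := by
    intro i; rw [hf 0]; show V i 0 = W i 0
    rw [hV, Matrix.mul_diagonal]; simp
  have hf1 : ∀ i, f 1 i = W i 1 * t := by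
    intro i; rw [hf 1]; show V i 1 = W i 1 * t
    rw [hV, Matrix.mul_diagonal]; simp
  have hf2 : ∀ i, f 2 i = W i 2 * (t * t) := by
    intro i; rw [hf 2]; show V i 2 = W i 2 * (t * t)
    rw [hV, Matrix.mul_diagonal]; simp [hu2q]
  have hW00 : W 0 0 = 1 := hWdiag 0
  have hW11 : W 1 1 = 1 := hWdiag 1
  have hW22 : W 2 2 = 1 := hWdiag 2
  have hW01 : W 0 1 = 0 := hWupper 0 1 (by decide)
  have hW02 : W 0 2 = 0 := hWupper 0 2 (by decide)
  have hW12 : W 1 2 = 0 := hWupper 1 2 (by decide)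
  -- the new framed basis matrix
  set Cm : Matrix (Fin 3) (Fin 3) (Sbar (q+1) 𝔽) :=
    Matrix.of ![![A 0 0, 0, 0], ![C10, A 1 1, 0], ![C20, C21, A 2 2]] with hCmdef
  have hCm00 : Cm 0 0 = A 0 0 := rfl
  have hCm01 : Cm 0 1 = 0 := rfl
  have hCm02 : Cm 0 2 = 0 := rfl
  have hCm10 : Cm 1 0 = C10 := rfl
  have hCm11 : Cm 1 1 = A 1 1 := rfl
  have hCm12 : Cm 1 2 = 0 := rfl
  have hCm20 : Cm 2 0 = C20 := rfl
  have hCm21 : Cm 2 1 = C21 := rfl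
  have hCm22 : Cm 2 2 = A 2 2 := rfl
  have hCunit : IsUnit Cm := by
    rw [Matrix.isUnit_iff_isUnit_det]
    have hdet : Cm.det = A 0 0 * A 1 1 * A 2 2 := by
      rw [Matrix.det_fin_three, hCm00, hCm01, hCm02, hCm10, hCm11, hCm12, hCm20, hCm21, hCm22]
      ring
    rw [hdet]; exact hdetA
  -- generators
  set F0 : Fin 3 → Sbar (q+1) 𝔽 := A 0 0 • f 0 + B10 • f 1 + B20 • f 2 with hF0def
  set F1 : Fin 3 → Sbar (q+1) 𝔽 := A 1 1 • f 1 + B21 • f 2 with hF1def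
  set F2 : Fin 3 → Sbar (q+1) 𝔽 := A 2 2 • f 2 with hF2def
  have hF0mem : F0 ∈ Fil := by
    rw [hF0def]
    exact add_mem (add_mem (Submodule.smul_mem _ _ (hmem 0)) (Submodule.smul_mem _ _ (hmem 1)))
      (Submodule.smul_mem _ _ (hmem 2))
  have hF1mem : F1 ∈ Fil := by
    rw [hF1def]
    exact add_mem (Submodule.smul_mem _ _ (hmem 1)) (Submodule.smul_mem _ _ (hmem 2))
  have hF2mem : F2 ∈ Fil := by
    rw [hF2def]; exact Submodule.smul_mem _ _ (hmem 2)
  have hC20γ : C20 = U20 * (a20 + z0 * (t ^ (br 1 0 + 1) * a21 * algebraMap 𝔽 (Sbar (q+1) 𝔽) m10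
      + t ^ br 2 0 * A 2 2 * algebraMap 𝔽 (Sbar (q+1) 𝔽) m20)) := by
    rw [hC20def, hA20, hA21, hT10p]
    linear_combination (z0 * a21 * algebraMap 𝔽 (Sbar (q+1) 𝔽) m10 * t ^ br 1 0) * hUU
  have hγ20m : a20 + z0 * (t ^ (br 1 0 + 1) * a21 * algebraMap 𝔽 (Sbar (q+1) 𝔽) m10
      + t ^ br 2 0 * A 2 2 * algebraMap 𝔽 (Sbar (q+1) 𝔽) m20)
      ∈ Algebra.adjoin 𝔽 ({t} : Set (Sbar (q+1) 𝔽)) := by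
    refine add_mem ha20m (mul_mem hz0m (add_mem ?_ ?_))
    · exact mul_mem (mul_mem (pow_mem htmem _) ha21m) (Subalgebra.algebraMap_mem _ _)
    · exact mul_mem (mul_mem (pow_mem htmem _) hA22mem) (Subalgebra.algebraMap_mem _ _)
  have hCdd : ∀ i j, ∃ w ∈ Algebra.adjoin 𝔽 ({t} : Set (Sbar (q+1) 𝔽)),
      Cm i j = Sbar.u (q+1) 𝔽 ^ br i j * w := by
    intro i j
    fin_cases i <;> fin_cases j
    · exact hAdd 0 0
    · exact ⟨0, Subalgebra.zero_mem _, (mul_zero _).symm⟩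
    · exact ⟨0, Subalgebra.zero_mem _, (mul_zero _).symm⟩
    · exact ⟨γ10, hγ10m, by show C10 = Sbar.u (q+1) 𝔽 ^ br 1 0 * γ10; rw [hC10γ, hU10def]⟩
    · exact hAdd 1 1
    · exact ⟨0, Subalgebra.zero_mem _, (mul_zero _).symm⟩
    · refine ⟨_, hγ20m, ?_⟩
      show C20 = Sbar.u (q+1) 𝔽 ^ br 2 0 * _
      rw [hC20γ, hU20def]
    · exact ⟨γ21, hγ21m, by show C21 = Sbar.u (q+1) 𝔽 ^ br 2 1 * γ21; rw [hC21γ, hU21def]⟩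
    · exact hAdd 2 2
  have hqb21 : Sbar.u (q+1) 𝔽 ^ (q + br 2 1) = t * U21 := by
    rw [htdef, hU21def, ← pow_add]
  -- ===== final assembly =====
  refine ⟨Cm, hCunit, hCdd, v10, v20, v20', v21,
    ![Units.mk0 b0 hb0, Units.mk0 b1 hb1, Units.mk0 b2 hb2],
    ![F0, F1, F2], ?_, ?_, ?_, ?_, ?_, ?_⟩
  · intro i; fin_cases i
    · exact hF0mem
    · exact hF1mem
    · exact hF2mem
  · -- shape of f̃₀
    funext i
    fin_cases i
    · show A 0 0 * f 0 0 + B10 * f 1 0 + B20 * f 2 0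
        = Cm 0 0 + (U10 * algebraMap 𝔽 (Sbar (q+1) 𝔽) v10) * Cm 0 1
          + (U20 * (algebraMap 𝔽 (Sbar (q+1) 𝔽) v20
              + t * algebraMap 𝔽 (Sbar (q+1) 𝔽) v20')) * Cm 0 2
      rw [hf0 0, hf1 0, hf2 0, hW00, hW01, hW02, hCm00, hCm01, hCm02]; ring
    · show A 0 0 * f 0 1 + B10 * f 1 1 + B20 * f 2 1
        = Cm 1 0 + (U10 * algebraMap 𝔽 (Sbar (q+1) 𝔽) v10) * Cm 1 1
          + (U20 * (algebraMap 𝔽 (Sbar (q+1) 𝔽) v20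
              + t * algebraMap 𝔽 (Sbar (q+1) 𝔽) v20')) * Cm 1 2
      rw [hf0 1, hf1 1, hf2 1, hW11, hW12, hCm10, hCm11, hCm12]
      linear_combination I10
    · show A 0 0 * f 0 2 + B10 * f 1 2 + B20 * f 2 2
        = Cm 2 0 + (U10 * algebraMap 𝔽 (Sbar (q+1) 𝔽) v10) * Cm 2 1
          + (U20 * (algebraMap 𝔽 (Sbar (q+1) 𝔽) v20
              + t * algebraMap 𝔽 (Sbar (q+1) 𝔽) v20')) * Cm 2 2
      rw [hf0 2, hf1 2, hf2 2, hW22, hCm20, hCm21, hCm22]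
      linear_combination I20 + W 2 1 * I10
  · -- shape of f̃₁
    funext i
    fin_cases i
    · show A 1 1 * f 1 0 + B21 * f 2 0
        = t * Cm 0 1 + (Sbar.u (q+1) 𝔽 ^ (q + br 2 1) * algebraMap 𝔽 (Sbar (q+1) 𝔽) v21) * Cm 0 2
      rw [hf1 0, hf2 0, hW01, hW02, hCm01, hCm02]; ring
    · show A 1 1 * f 1 1 + B21 * f 2 1
        = t * Cm 1 1 + (Sbar.u (q+1) 𝔽 ^ (q + br 2 1) * algebraMap 𝔽 (Sbar (q+1) 𝔽) v21) * Cm 1 2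
      rw [hf1 1, hf2 1, hW11, hW12, hCm11, hCm12]; ring
    · show A 1 1 * f 1 2 + B21 * f 2 2
        = t * Cm 2 1 + (Sbar.u (q+1) 𝔽 ^ (q + br 2 1) * algebraMap 𝔽 (Sbar (q+1) 𝔽) v21) * Cm 2 2
      rw [hf1 2, hf2 2, hW22, hCm21, hCm22]
      linear_combination t * I21 + (-(algebraMap 𝔽 (Sbar (q+1) 𝔽) v21 * A 2 2)) * hqb21
  · -- shape of f̃₂
    funext i
    fin_cases i
    · show A 2 2 * f 2 0 = Sbar.u (q+1) 𝔽 ^ (2*q) * Cm 0 2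
      rw [hf2 0, hW02, hCm02, hu2q]; ring
    · show A 2 2 * f 2 1 = Sbar.u (q+1) 𝔽 ^ (2*q) * Cm 1 2
      rw [hf2 1, hW12, hCm12, hu2q]; ring
    · show A 2 2 * f 2 2 = Sbar.u (q+1) 𝔽 ^ (2*q) * Cm 2 2
      rw [hf2 2, hW22, hCm22, hu2q]; ring
  · -- the new generators span Fil
    apply le_antisymm
    · rw [Submodule.span_le]
      intro x hx
      simp only [Set.mem_insert_iff, Set.mem_singleton_iff] at hx
      rcases hx with rfl | rfl | rfl
      · exact hF0mem
      · exact hF1mem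
      · exact hF2mem
    · rw [hFil]
      show Submodule.span (Sbar (q+1) 𝔽) {f 0, f 1, f 2}
          ≤ Submodule.span (Sbar (q+1) 𝔽) ({F0, F1, F2} : Set (Fin 3 → Sbar (q+1) 𝔽))
      rw [Submodule.span_le]
      have hm2 : f 2 ∈ Submodule.span (Sbar (q+1) 𝔽) ({F0, F1, F2} : Set (Fin 3 → Sbar (q+1) 𝔽)) := by
        obtain ⟨va, hva⟩ := hU22
        have h2 : f 2 = (↑va⁻¹ : Sbar (q+1) 𝔽) • F2 := by
          rw [hF2def, ← hva, smul_smul, Units.inv_mul, one_smul]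
        rw [h2]
        exact Submodule.smul_mem _ _ (Submodule.subset_span (by simp))
      have hm1 : f 1 ∈ Submodule.span (Sbar (q+1) 𝔽) ({F0, F1, F2} : Set (Fin 3 → Sbar (q+1) 𝔽)) := by
        obtain ⟨vb, hvb⟩ := hU11
        have h1 : f 1 = (↑vb⁻¹ : Sbar (q+1) 𝔽) • (F1 - B21 • f 2) := by
          rw [hF1def]
          have hx : A 1 1 • f 1 + B21 • f 2 - B21 • f 2 = A 1 1 • f 1 := by abel
          rw [hx, ← hvb, smul_smul, Units.inv_mul, one_smul]
        rw [h1]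
        exact Submodule.smul_mem _ _ (sub_mem (Submodule.subset_span (by simp))
          (Submodule.smul_mem _ _ hm2))
      have hm0 : f 0 ∈ Submodule.span (Sbar (q+1) 𝔽) ({F0, F1, F2} : Set (Fin 3 → Sbar (q+1) 𝔽)) := by
        obtain ⟨vc, hvc⟩ := hU00
        have h0 : f 0 = (↑vc⁻¹ : Sbar (q+1) 𝔽) • (F0 - B10 • f 1 - B20 • f 2) := by
          rw [hF0def]
          have hx : A 0 0 • f 0 + B10 • f 1 + B20 • f 2 - B10 • f 1 - B20 • f 2
              = A 0 0 • f 0 := by abel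
          rw [hx, ← hvc, smul_smul, Units.inv_mul, one_smul]
        rw [h0]
        exact Submodule.smul_mem _ _ (sub_mem (sub_mem (Submodule.subset_span (by simp))
          (Submodule.smul_mem _ _ hm1)) (Submodule.smul_mem _ _ hm2))
      intro x hx
      simp only [Set.mem_insert_iff, Set.mem_singleton_iff] at hx
      rcases hx with rfl | rfl | rfl
      · exact hm0
      · exact hm1
      · exact hm2
  · -- Frobenius acts diagonally
    intro i
    fin_cases i
    · show φ2 ⟨F0, hF0mem⟩ = algebraMap 𝔽 (Sbar (q+1) 𝔽) b0 • (fun k => Cm k 0)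
      have hrep : (⟨F0, hF0mem⟩ : Fil)
          = A 0 0 • (⟨f 0, hmem 0⟩ : Fil) + B10 • ⟨f 1, hmem 1⟩ + B20 • ⟨f 2, hmem 2⟩ := by
        apply Subtype.ext
        simp only [Submodule.coe_add, SetLike.val_smul, hF0def]
      rw [hrep, map_add, map_add, hφ2lin, hφ2lin, hφ2lin, hφ2f 0, hφ2f 1, hφ2f 2,
        hφA00, hφB10, hφB20]
      funext k
      fin_cases k
      · show algebraMap 𝔽 (Sbar (q+1) 𝔽) b0 * A 0 0
            + U10 * t ^ br 1 0 * algebraMap 𝔽 (Sbar (q+1) 𝔽) m10 * A 0 1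
            + U20 * t ^ br 2 0 * algebraMap 𝔽 (Sbar (q+1) 𝔽) m20 * A 0 2
          = algebraMap 𝔽 (Sbar (q+1) 𝔽) b0 * Cm 0 0
        rw [z01, z02, hCm00]; ring
      · show algebraMap 𝔽 (Sbar (q+1) 𝔽) b0 * A 1 0
            + U10 * t ^ br 1 0 * algebraMap 𝔽 (Sbar (q+1) 𝔽) m10 * A 1 1
            + U20 * t ^ br 2 0 * algebraMap 𝔽 (Sbar (q+1) 𝔽) m20 * A 1 2
          = algebraMap 𝔽 (Sbar (q+1) 𝔽) b0 * Cm 1 0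
        rw [z12, hCm10, hC10def]
        linear_combination (-(A 1 1 * (U10 * t ^ br 1 0) * algebraMap 𝔽 (Sbar (q+1) 𝔽) m10)) * hz0
      · show algebraMap 𝔽 (Sbar (q+1) 𝔽) b0 * A 2 0
            + U10 * t ^ br 1 0 * algebraMap 𝔽 (Sbar (q+1) 𝔽) m10 * A 2 1
            + U20 * t ^ br 2 0 * algebraMap 𝔽 (Sbar (q+1) 𝔽) m20 * A 2 2
          = algebraMap 𝔽 (Sbar (q+1) 𝔽) b0 * Cm 2 0
        rw [hCm20, hC20def]
        linear_combination (-(A 2 1 * (U10 * t ^ br 1 0) * algebraMap 𝔽 (Sbar (q+1) 𝔽) m10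
          + A 2 2 * (U20 * t ^ br 2 0) * algebraMap 𝔽 (Sbar (q+1) 𝔽) m20)) * hz0
    · show φ2 ⟨F1, hF1mem⟩ = algebraMap 𝔽 (Sbar (q+1) 𝔽) b1 • (fun k => Cm k 1)
      have hrep : (⟨F1, hF1mem⟩ : Fil)
          = A 1 1 • (⟨f 1, hmem 1⟩ : Fil) + B21 • ⟨f 2, hmem 2⟩ := by
        apply Subtype.ext
        simp only [Submodule.coe_add, SetLike.val_smul, hF1def]
      rw [hrep, map_add, hφ2lin, hφ2lin, hφ2f 1, hφ2f 2, hφA11, hφB21]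
      funext k
      fin_cases k
      · show algebraMap 𝔽 (Sbar (q+1) 𝔽) b1 * A 0 1
            + U21 * t ^ br 2 1 * algebraMap 𝔽 (Sbar (q+1) 𝔽) m21 * A 0 2
          = algebraMap 𝔽 (Sbar (q+1) 𝔽) b1 * Cm 0 1
        rw [z01, z02, hCm01]; ring
      · show algebraMap 𝔽 (Sbar (q+1) 𝔽) b1 * A 1 1
            + U21 * t ^ br 2 1 * algebraMap 𝔽 (Sbar (q+1) 𝔽) m21 * A 1 2
          = algebraMap 𝔽 (Sbar (q+1) 𝔽) b1 * Cm 1 1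
        rw [z12, hCm11]; ring
      · show algebraMap 𝔽 (Sbar (q+1) 𝔽) b1 * A 2 1
            + U21 * t ^ br 2 1 * algebraMap 𝔽 (Sbar (q+1) 𝔽) m21 * A 2 2
          = algebraMap 𝔽 (Sbar (q+1) 𝔽) b1 * Cm 2 1
        rw [hCm21, hC21def]
        linear_combination (-(A 2 2 * (U21 * t ^ br 2 1) * algebraMap 𝔽 (Sbar (q+1) 𝔽) m21)) * hz1
    · show φ2 ⟨F2, hF2mem⟩ = algebraMap 𝔽 (Sbar (q+1) 𝔽) b2 • (fun k => Cm k 2)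
      have hrep : (⟨F2, hF2mem⟩ : Fil) = A 2 2 • (⟨f 2, hmem 2⟩ : Fil) := by
        apply Subtype.ext
        simp only [SetLike.val_smul, hF2def]
      rw [hrep, hφ2lin, hφ2f 2, hφA22]
      funext k
      fin_cases k
      · show algebraMap 𝔽 (Sbar (q+1) 𝔽) b2 * A 0 2 = algebraMap 𝔽 (Sbar (q+1) 𝔽) b2 * Cm 0 2
        rw [z02, hCm02]
      · show algebraMap 𝔽 (Sbar (q+1) 𝔽) b2 * A 1 2 = algebraMap 𝔽 (Sbar (q+1) 𝔽) b2 * Cm 1 2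
        rw [z12, hCm12]
      · show algebraMap 𝔽 (Sbar (q+1) 𝔽) b2 * A 2 2 = algebraMap 𝔽 (Sbar (q+1) 𝔽) b2 * Cm 2 2
        rw [hCm22]
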